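/- For n ≥ 2 there exists a constant C₀ > 0 such that the function φ(x) = ∫_{S^{n-1}} e^{x·ω} dω satisfies 0 < φ(x) ≤ C₀ (1+|x|)^{-(n-1)/2} e^{|x|} for all x ∈ ℝⁿ. -/

import Mathlib

open MeasureTheory Metric
open Set
open scoped ENNReal Pointwise
set_option maxHeartbeats 1000000

lemma vol_box (n : ℕ) (c : Fin n → ℝ) :
    volume {y : EuclideanSpace ℝ (Fin n) | ∀ i, |y i| ≤ c i}
      = ∏ i, ENNReal.ofReal (2 * c i) := by
  have : {y : EuclideanSpace ℝ (Fin n) | ∀ i, |y i| ≤ c i}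
      = (MeasurableEquiv.toLp 2 (Fin n → ℝ)).symm ⁻¹' (Set.pi univ fun i => Icc (-(c i)) (c i)) := by
    ext y
    simp only [mem_setOf_eq, mem_preimage, Set.mem_pi, mem_univ, forall_true_left, mem_Icc, abs_le]
    rfl
  rw [this, (EuclideanSpace.volume_preserving_symm_measurableEquiv_toLp (Fin n)).measure_preimage
      ((MeasurableSet.univ_pi fun i => measurableSet_Icc).nullMeasurableSet), volume_pi_pi]
  congr 1
  ext i
  rw [Real.volume_Icc]
  ring_nf

lemma cap_bound (n : ℕ) (hn : 1 ≤ n) (v : EuclideanSpace ℝ (Fin n)) (hv : ‖v‖ = 1) (ρ : ℝ) :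
    (volume : Measure (EuclideanSpace ℝ (Fin n))).toSphere
        {ω : sphere (0 : EuclideanSpace ℝ (Fin n)) 1 | ‖(ω : EuclideanSpace ℝ (Fin n)) - v‖ ≤ ρ}
      ≤ n * (ENNReal.ofReal 2 * ENNReal.ofReal (2 * ρ) ^ (n - 1)) := by
  classical
  set i₀ : Fin n := ⟨0, hn⟩ with hi₀
  set s : Set (sphere (0 : EuclideanSpace ℝ (Fin n)) 1) := {ω | ‖(ω : EuclideanSpace ℝ (Fin n)) - v‖ ≤ ρ} with hs_def
  have hs : MeasurableSet s := by
    have : IsClosed s := isClosed_le (by fun_prop) continuous_const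
    exact this.measurableSet
  have hcard : Module.finrank ℝ (EuclideanSpace ℝ (Fin n)) = Fintype.card (Fin n) := by
    rw [Fintype.card_fin]; exact finrank_euclideanSpace_fin
  have horth : Orthonormal ℝ (({i₀} : Set (Fin n)).restrict (fun _ : Fin n => v)) := by
    rw [orthonormal_iff_ite]
    rintro ⟨i, hi⟩ ⟨j, hj⟩
    simp only [mem_singleton_iff] at hi hj
    subst hi; subst hj
    simp only [restrict, if_pos rfl]
    rw [if_pos trivial, real_inner_self_eq_norm_mul_norm]
    show ‖v‖ * ‖v‖ = 1
    rw [hv]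
    norm_num
  obtain ⟨b, hb⟩ := horth.exists_orthonormalBasis_extension_of_card_eq hcard
  have hb0 : b i₀ = v := hb i₀ rfl
  rw [Measure.toSphere_apply' _ hs]
  have hdim : (Module.finrank ℝ (EuclideanSpace ℝ (Fin n)) : ℝ≥0∞) = n := by rw [hcard]; norm_cast; simp
  rw [hdim]
  refine mul_le_mul_right ?_ _
  set c : Fin n → ℝ := fun i => if i = i₀ then 1 else ρ with hc
  have hsub : (Ioo (0:ℝ) 1 • (Subtype.val '' s) : Set (EuclideanSpace ℝ (Fin n)))
      ⊆ {y : EuclideanSpace ℝ (Fin n) | ∀ i, |b.repr y i| ≤ c i} := by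
    rintro y hy
    rw [Set.mem_smul] at hy
    obtain ⟨t, ht, z, hz, rfl⟩ := hy
    obtain ⟨ω, hω, rfl⟩ := hz
    intro i
    have hrepr : b.repr (t • (ω : EuclideanSpace ℝ (Fin n))) i = t * inner ℝ (b i) (ω : EuclideanSpace ℝ (Fin n)) := by
      simp only [b.repr_apply_apply, real_inner_smul_right]
    rw [hrepr]
    have hωn : ‖(ω : EuclideanSpace ℝ (Fin n))‖ = 1 := norm_eq_of_mem_sphere ω
    have ht0 : 0 ≤ t := ht.1.le
    have ht1 : t ≤ 1 := ht.2.le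
    rw [abs_mul, abs_of_nonneg ht0]
    by_cases hi : i = i₀
    · subst hi
      rw [hb0]
      have h2 := abs_real_inner_le_norm v (ω : EuclideanSpace ℝ (Fin n))
      rw [hv, hωn, one_mul] at h2
      simp only [hc, if_pos rfl]
      calc t * |inner ℝ v (ω : EuclideanSpace ℝ (Fin n))| ≤ 1 * 1 :=
            mul_le_mul ht1 h2 (abs_nonneg _) zero_le_one
        _ = 1 := one_mul 1
    · have hbiv : inner ℝ (b i) v = (0:ℝ) := by
        rw [← hb0]
        have h3 := b.orthonormal
        rw [orthonormal_iff_ite] at h3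
        simpa [hi] using h3 i i₀
      have heq : (inner ℝ (b i) (ω : EuclideanSpace ℝ (Fin n)) : ℝ) = inner ℝ (b i) ((ω : EuclideanSpace ℝ (Fin n)) - v) := by
        rw [inner_sub_right, hbiv, sub_zero]
      rw [heq]
      have h1 : |(inner ℝ (b i) ((ω : EuclideanSpace ℝ (Fin n)) - v) : ℝ)| ≤ ρ := by
        have h4 := abs_real_inner_le_norm (b i) ((ω : EuclideanSpace ℝ (Fin n)) - v)
        rw [b.orthonormal.1 i, one_mul] at h4
        exact h4.trans hω
      simp only [hc, if_neg hi]
      calc t * |inner ℝ (b i) ((ω : EuclideanSpace ℝ (Fin n)) - v)| ≤ 1 * ρ :=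
            mul_le_mul ht1 h1 (abs_nonneg _) zero_le_one
        _ = ρ := one_mul ρ
  calc volume (Ioo (0:ℝ) 1 • (Subtype.val '' s) : Set (EuclideanSpace ℝ (Fin n)))
      ≤ volume {y : EuclideanSpace ℝ (Fin n) | ∀ i, |b.repr y i| ≤ c i} := measure_mono hsub
    _ = volume {u : EuclideanSpace ℝ (Fin n) | ∀ i, |u i| ≤ c i} := by
        have : {y : EuclideanSpace ℝ (Fin n) | ∀ i, |b.repr y i| ≤ c i}
            = b.repr ⁻¹' {u : EuclideanSpace ℝ (Fin n) | ∀ i, |u i| ≤ c i} := rfl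
        rw [this]
        refine b.measurePreserving_repr.measure_preimage ?_
        refine MeasurableSet.nullMeasurableSet ?_
        have : {u : EuclideanSpace ℝ (Fin n) | ∀ i, |u i| ≤ c i}
            = ⋂ i, {u : EuclideanSpace ℝ (Fin n) | |u i| ≤ c i} := by
          ext; simp
        rw [this]
        refine MeasurableSet.iInter fun i => ?_
        exact measurableSet_le (by fun_prop) measurable_const
    _ = ∏ i, ENNReal.ofReal (2 * c i) := vol_box n c
    _ = ENNReal.ofReal 2 * ENNReal.ofReal (2 * ρ) ^ (n - 1) := by
        rw [← Finset.mul_prod_erase Finset.univ _ (Finset.mem_univ i₀)]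
        simp only [hc, if_pos rfl, mul_one]
        congr 1
        rw [Finset.prod_congr rfl (fun i hi => by
          rw [if_neg (Finset.mem_erase.1 hi).1]), Finset.prod_const]
        congr 1
        simp [Finset.card_erase_of_mem, Fintype.card_fin]

lemma cap_bound_real (n : ℕ) (hn : 1 ≤ n) (v : EuclideanSpace ℝ (Fin n)) (hv : ‖v‖ = 1)
    (ρ : ℝ) (hρ : 0 ≤ ρ) :
    ((volume : Measure (EuclideanSpace ℝ (Fin n))).toSphere
        {ω : sphere (0 : EuclideanSpace ℝ (Fin n)) 1 | ‖(ω : EuclideanSpace ℝ (Fin n)) - v‖ ≤ ρ}).toReal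
      ≤ (n : ℝ) * (2 * (2 * ρ) ^ (n - 1)) := by
  refine ENNReal.toReal_le_of_le_ofReal (by positivity) ?_
  refine (cap_bound n hn v hv ρ).trans (le_of_eq ?_)
  have hpow : ENNReal.ofReal ((2*ρ) ^ (n-1)) = ENNReal.ofReal (2*ρ) ^ (n-1) :=
    ENNReal.ofReal_pow (mul_nonneg (by norm_num) hρ) _
  conv_rhs => rw [ENNReal.ofReal_mul (by positivity : (0:ℝ) ≤ (n:ℝ)), ENNReal.ofReal_natCast,
    ENNReal.ofReal_mul (by norm_num : (0:ℝ) ≤ 2), hpow]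


/-- For `n ≥ 2` there exists `C₀ > 0` such that
`φ(x) = ∫_{S^{n-1}} e^{x·ω} dω` satisfies
`0 < φ(x) ≤ C₀ (1+|x|)^{-(n-1)/2} e^{|x|}` for all `x ∈ ℝⁿ`. -/
theorem stmt7 (n : ℕ) (hn : 2 ≤ n)
    (φ : EuclideanSpace ℝ (Fin n) → ℝ)
    (hφ : ∀ x, φ x = ∫ ω : Metric.sphere (0 : EuclideanSpace ℝ (Fin n)) 1,
        Real.exp (inner ℝ x (ω : EuclideanSpace ℝ (Fin n)))
          ∂((volume : Measure (EuclideanSpace ℝ (Fin n))).toSphere)) :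
    ∃ C₀ : ℝ, 0 < C₀ ∧ ∀ x,
      0 < φ x ∧
      φ x ≤ C₀ * (1 + ‖x‖) ^ (-((n : ℝ) - 1) / 2) * Real.exp ‖x‖ := by
  classical
  have hn1 : 1 ≤ n := le_trans (by norm_num) hn
  set σ := (volume : Measure (EuclideanSpace ℝ (Fin n))).toSphere with hσ
  set T : ℝ := (σ Set.univ).toReal with hTdef
  have hTpos : 0 < T := by
    rw [hTdef, hσ, Measure.toSphere_apply_univ]
    refine ENNReal.toReal_pos ?_ ?_
    · refine (ENNReal.mul_pos ?_ ?_).ne'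
      · simp [finrank_euclideanSpace_fin]; omega
      · exact (measure_ball_pos volume (0 : EuclideanSpace ℝ (Fin n)) one_pos).ne'
    · exact ENNReal.mul_ne_top (ENNReal.natCast_ne_top _)
        (measure_ball_lt_top).ne
  set p : ℝ := ((n : ℝ) - 1) / 2 with hpdef
  have hp0 : 0 ≤ p := by
    rw [hpdef]
    have : (2:ℝ) ≤ (n:ℝ) := by exact_mod_cast hn
    linarith
  have hpn : p ≤ (n : ℝ) := by
    rw [hpdef]
    have : (0:ℝ) ≤ (n:ℝ) := by positivity
    linarith
  set D : ℝ := (n : ℝ) * 2 * 2 ^ (n - 1) * 2 ^ n with hDdef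
  have hD0 : 0 < D := by positivity
  set g : ℕ → ℝ := fun k => ((k : ℝ) + 1) ^ n * Real.exp (-1) ^ k with hgdef
  have hg0 : ∀ k, 0 ≤ g k := fun k => by positivity
  have hgsum : Summable g := by
    have h1 : ‖Real.exp (-1)‖ < 1 := by
      rw [Real.norm_eq_abs, abs_of_pos (Real.exp_pos _)]
      exact Real.exp_lt_one_iff.mpr (by norm_num)
    have h2 := summable_pow_mul_geometric_of_norm_lt_one n h1
    have h3 : Summable (fun k : ℕ => ((k + 1 : ℕ) : ℝ) ^ n * Real.exp (-1) ^ (k + 1)) :=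
      (summable_nat_add_iff (f := fun k : ℕ => (k : ℝ) ^ n * Real.exp (-1) ^ k) 1).mpr h2
    have h4 := h3.mul_left (Real.exp 1)
    refine h4.congr fun k => ?_
    rw [hgdef]
    simp only [pow_succ]
    push_cast
    have he : Real.exp 1 * Real.exp (-1) = 1 := by rw [← Real.exp_add]; norm_num
    calc Real.exp 1 * (((k:ℝ) + 1) ^ n * (Real.exp (-1) ^ k * Real.exp (-1)))
        = (Real.exp 1 * Real.exp (-1)) * (((k:ℝ)+1)^n * Real.exp (-1)^k) := by ring
      _ = ((k:ℝ) + 1) ^ n * Real.exp (-1) ^ k := by rw [he]; ring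
  set G : ℝ := ∑' k, g k with hGdef
  have hG0 : 0 ≤ G := tsum_nonneg hg0
  refine ⟨(2:ℝ) ^ p * (D * G + T + 1), by positivity, fun x => ?_⟩
  set r : ℝ := ‖x‖ with hrdef
  have hr0 : 0 ≤ r := norm_nonneg x
  set f : sphere (0 : EuclideanSpace ℝ (Fin n)) 1 → ℝ :=
    fun ω => Real.exp (inner ℝ x (ω : EuclideanSpace ℝ (Fin n))) with hfdef
  have hf_cont : Continuous f := by
    apply Real.continuous_exp.comp
    exact Continuous.inner continuous_const continuous_subtype_val
  have hinner : ∀ ω : sphere (0 : EuclideanSpace ℝ (Fin n)) 1,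
      |(inner ℝ x (ω : EuclideanSpace ℝ (Fin n)) : ℝ)| ≤ r := by
    intro ω
    have := abs_real_inner_le_norm x (ω : EuclideanSpace ℝ (Fin n))
    rwa [norm_eq_of_mem_sphere ω, mul_one] at this
  have hf_int : Integrable f σ := by
    refine ⟨hf_cont.aestronglyMeasurable, ?_⟩
    refine MeasureTheory.HasFiniteIntegral.of_bounded (C := Real.exp r) ?_
    filter_upwards with ω
    rw [Real.norm_eq_abs, abs_of_pos (Real.exp_pos _)]
    exact Real.exp_le_exp.2 ((le_abs_self _).trans (hinner ω))
  have hφx : φ x = ∫ ω, f ω ∂σ := hφ x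
  have hlow : Real.exp (-r) * T ≤ φ x := by
    rw [hφx]
    have h5 := MeasureTheory.integral_mono (integrable_const (Real.exp (-r))) hf_int
      (fun ω => Real.exp_le_exp.2 (abs_le.1 (hinner ω)).1)
    simpa [integral_const, smul_eq_mul, mul_comm, hTdef, measureReal_def] using h5
  have hpos : 0 < φ x := lt_of_lt_of_le (by positivity) hlow
  refine ⟨hpos, ?_⟩
  have hexp : -((n : ℝ) - 1) / 2 = -p := by rw [hpdef]; ring
  rw [hexp, Real.rpow_neg (by linarith : (0:ℝ) ≤ 1 + r)]
  have h1rp : (0:ℝ) < (1 + r) ^ p := Real.rpow_pos_of_pos (by linarith) p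
  have h2p : (0:ℝ) < (2:ℝ) ^ p := Real.rpow_pos_of_pos (by norm_num) p
  by_cases hr1 : r ≤ 1
  · -- small r : crude bound
    have hup : φ x ≤ T * Real.exp r := by
      rw [hφx]
      have h5 := MeasureTheory.integral_mono hf_int (integrable_const (Real.exp r))
        (fun ω => Real.exp_le_exp.2 ((le_abs_self _).trans (hinner ω)))
      simpa [integral_const, smul_eq_mul, mul_comm, hTdef, measureReal_def] using h5
    refine hup.trans ?_
    have h6 : (1 + r) ^ p ≤ (2:ℝ) ^ p :=
      Real.rpow_le_rpow (by linarith) (by linarith) hp0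
    have h7 : T * (1 + r) ^ p ≤ 2 ^ p * (D * G + T + 1) * 1 := by
      rw [mul_one]
      calc T * (1 + r) ^ p ≤ T * 2 ^ p := by
            exact mul_le_mul_of_nonneg_left h6 hTpos.le
        _ ≤ 2 ^ p * (D * G + T + 1) := by
            rw [mul_comm]
            refine mul_le_mul_of_nonneg_left ?_ h2p.le
            have : 0 ≤ D * G := mul_nonneg hD0.le hG0
            linarith
    have h8 : T ≤ 2 ^ p * (D * G + T + 1) * ((1 + r) ^ p)⁻¹ := by
      rw [← div_eq_mul_inv, le_div_iff₀ h1rp]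
      simpa using h7
    exact mul_le_mul_of_nonneg_right h8 (Real.exp_pos r).le
  · push_neg at hr1
    have hrpos : (0:ℝ) < r := by linarith
    have hrp : (0:ℝ) < r ^ p := Real.rpow_pos_of_pos hrpos p
    set v : EuclideanSpace ℝ (Fin n) := r⁻¹ • x with hvdef
    have hv : ‖v‖ = 1 := by
      rw [hvdef, norm_smul, norm_inv, Real.norm_eq_abs, abs_of_pos hrpos, ← hrdef,
        inv_mul_cancel₀ hrpos.ne']
    set A : ℕ → Set (sphere (0 : EuclideanSpace ℝ (Fin n)) 1) :=
      fun k => (fun ω : sphere (0 : EuclideanSpace ℝ (Fin n)) 1 =>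
        (inner ℝ x (ω : EuclideanSpace ℝ (Fin n)) : ℝ)) ⁻¹'
          Set.Ioc (r - ((k:ℝ) + 1)) (r - (k:ℝ)) with hAdef
    have hinner_cont : Continuous (fun ω : sphere (0 : EuclideanSpace ℝ (Fin n)) 1 =>
        (inner ℝ x (ω : EuclideanSpace ℝ (Fin n)) : ℝ)) :=
      Continuous.inner continuous_const continuous_subtype_val
    have hmA : ∀ k, MeasurableSet (A k) :=
      fun k => hinner_cont.measurable measurableSet_Ioc
    have hdis : Pairwise (Function.onFun Disjoint A) := by
      intro k l hkl
      rw [Function.onFun, Set.disjoint_left]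
      intro ω h1 h2
      apply hkl
      simp only [hAdef, Set.mem_preimage, Set.mem_Ioc] at h1 h2
      have e1 : ((k:ℝ)) < (l:ℝ) + 1 := by linarith
      have e2 : ((l:ℝ)) < (k:ℝ) + 1 := by linarith
      have e1' : k < l + 1 := by exact_mod_cast e1
      have e2' : l < k + 1 := by exact_mod_cast e2
      omega
    have hcover : (⋃ k, A k) = Set.univ := by
      ext ω
      simp only [Set.mem_iUnion, Set.mem_univ, iff_true, hAdef, Set.mem_preimage, Set.mem_Ioc]
      set t : ℝ := (inner ℝ x (ω : EuclideanSpace ℝ (Fin n)) : ℝ) with htdef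
      have ht : |t| ≤ r := hinner ω
      have ht1 : t ≤ r := (le_abs_self t).trans ht
      have h0 : 0 ≤ r - t := by linarith
      refine ⟨⌊r - t⌋₊, ?_, ?_⟩
      · have := Nat.lt_floor_add_one (r - t)
        linarith
      · have := Nat.floor_le h0
        linarith
    have hsum : HasSum (fun k => ∫ ω in A k, f ω ∂σ) (φ x) := by
      have h9 := MeasureTheory.hasSum_integral_iUnion hmA hdis
        (by rw [hcover]; exact hf_int.integrableOn)
      rw [hcover, Measure.restrict_univ] at h9
      rw [hφx]
      exact h9
    have hterm : ∀ k : ℕ, ∫ ω in A k, f ω ∂σ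
        ≤ (Real.exp r * D * (r ^ p)⁻¹) * g k := by
      intro k
      set ρ : ℝ := Real.sqrt (2 * ((k:ℝ) + 1) / r) with hρdef
      have hcapsub : A k ⊆ {ω : sphere (0 : EuclideanSpace ℝ (Fin n)) 1 |
          ‖(ω : EuclideanSpace ℝ (Fin n)) - v‖ ≤ ρ} := by
        intro ω hω
        simp only [hAdef, Set.mem_preimage, Set.mem_Ioc] at hω
        simp only [Set.mem_setOf_eq]
        have hωn : ‖(ω : EuclideanSpace ℝ (Fin n))‖ = 1 := norm_eq_of_mem_sphere ω
        have hiv : (inner ℝ (ω : EuclideanSpace ℝ (Fin n)) v : ℝ)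
            = r⁻¹ * (inner ℝ x (ω : EuclideanSpace ℝ (Fin n)) : ℝ) := by
          rw [real_inner_comm, hvdef, real_inner_smul_left]
        have hsq : ‖(ω : EuclideanSpace ℝ (Fin n)) - v‖ ^ 2
            = 2 - 2 * (r⁻¹ * (inner ℝ x (ω : EuclideanSpace ℝ (Fin n)) : ℝ)) := by
          rw [norm_sub_sq_real, hωn, hv, hiv]
          ring
        rw [hρdef]
        rw [Real.le_sqrt (norm_nonneg _) (by positivity)]
        rw [hsq]
        have hkey : r - ((k:ℝ) + 1) < (inner ℝ x (ω : EuclideanSpace ℝ (Fin n)) : ℝ) := hω.1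
        have hrinv : (0:ℝ) < r⁻¹ := inv_pos.2 hrpos
        have : r⁻¹ * (r - ((k:ℝ) + 1)) ≤ r⁻¹ * (inner ℝ x (ω : EuclideanSpace ℝ (Fin n)) : ℝ) :=
          mul_le_mul_of_nonneg_left hkey.le hrinv.le
        have hri : r⁻¹ * r = 1 := inv_mul_cancel₀ hrpos.ne'
        have hdd : 2 * ((k:ℝ) + 1) / r = 2 * ((k:ℝ)+1) * r⁻¹ := by
          rw [div_eq_mul_inv]
        rw [hdd]
        nlinarith [hri]
      have hmeas_le : (σ (A k)).toReal ≤ (n : ℝ) * (2 * (2 * ρ) ^ (n - 1)) := by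
        refine le_trans ?_ (cap_bound_real n hn1 v hv ρ (Real.sqrt_nonneg _))
        exact ENNReal.toReal_mono (measure_ne_top σ _) (measure_mono hcapsub)
      -- bound ρ ^ (n-1)
      have hρpow : ρ ^ (n - 1) ≤ 2 ^ n * ((k:ℝ) + 1) ^ n * (r ^ p)⁻¹ := by
        set a : ℝ := 2 * ((k:ℝ) + 1) / r with hadef
        have ha0 : 0 ≤ a := by positivity
        have h10 : ρ ^ (n - 1) = a ^ (((n:ℝ) - 1) / 2) := by
          have hcast : (((n - 1 : ℕ)) : ℝ) = (n : ℝ) - 1 := by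
            rw [Nat.cast_sub hn1, Nat.cast_one]
          rw [← Real.rpow_natCast ρ (n - 1), hρdef, Real.rpow_natCast, ← Real.rpow_natCast,
            hcast, Real.sqrt_eq_rpow, ← Real.rpow_mul ha0]
          congr 1
          ring
        rw [h10, ← hpdef]
        have h11 : a ^ p = (2 * ((k:ℝ) + 1)) ^ p * (r ^ p)⁻¹ := by
          rw [hadef, Real.div_rpow (by positivity) hrpos.le, div_eq_mul_inv]
        rw [h11]
        refine mul_le_mul_of_nonneg_right ?_ (inv_nonneg.2 hrp.le)
        have h12 : (2 * ((k:ℝ) + 1)) ^ p ≤ (2 * ((k:ℝ) + 1)) ^ ((n:ℝ)) :=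
          Real.rpow_le_rpow_of_exponent_le (by linarith [Nat.cast_nonneg (α := ℝ) k]) hpn
        refine h12.trans (le_of_eq ?_)
        rw [Real.rpow_natCast, mul_pow]
      have hstep1 : ∫ ω in A k, f ω ∂σ ≤ Real.exp (r - (k:ℝ)) * (σ (A k)).toReal := by
        calc ∫ ω in A k, f ω ∂σ ≤ ∫ _ω in A k, Real.exp (r - (k:ℝ)) ∂σ := by
              refine MeasureTheory.setIntegral_mono_on hf_int.integrableOn
                (MeasureTheory.integrableOn_const (measure_lt_top σ _).ne) (hmA k) ?_
              intro ω hω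
              simp only [hAdef, Set.mem_preimage, Set.mem_Ioc] at hω
              exact Real.exp_le_exp.2 hω.2
          _ = Real.exp (r - (k:ℝ)) * (σ (A k)).toReal := by
              rw [MeasureTheory.setIntegral_const, smul_eq_mul, mul_comm, measureReal_def]
      have hexpk : Real.exp (r - (k:ℝ)) = Real.exp r * Real.exp (-1) ^ k := by
        rw [← Real.exp_nat_mul, ← Real.exp_add]
        congr 1
        push_cast
        ring
      calc ∫ ω in A k, f ω ∂σ ≤ Real.exp (r - (k:ℝ)) * (σ (A k)).toReal := hstep1
        _ ≤ Real.exp (r - (k:ℝ)) * ((n : ℝ) * (2 * (2 * ρ) ^ (n - 1))) :=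
            mul_le_mul_of_nonneg_left hmeas_le (Real.exp_pos _).le
        _ = Real.exp (r - (k:ℝ)) * ((n : ℝ) * 2 * 2 ^ (n-1) * ρ ^ (n - 1)) := by
            rw [mul_pow]; ring
        _ ≤ Real.exp (r - (k:ℝ)) * ((n : ℝ) * 2 * 2 ^ (n-1) * (2 ^ n * ((k:ℝ) + 1) ^ n * (r ^ p)⁻¹)) := by
            refine mul_le_mul_of_nonneg_left ?_ (Real.exp_pos _).le
            refine mul_le_mul_of_nonneg_left hρpow (by positivity)
        _ = (Real.exp r * D * (r ^ p)⁻¹) * g k := by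
            rw [hexpk, hDdef, hgdef]
            ring
    have hb_sum : Summable (fun k => (Real.exp r * D * (r ^ p)⁻¹) * g k) :=
      hgsum.mul_left _
    have hφle : φ x ≤ (Real.exp r * D * (r ^ p)⁻¹) * G := by
      rw [← hsum.tsum_eq, hGdef, ← tsum_mul_left]
      exact Summable.tsum_le_tsum hterm hsum.summable hb_sum
    refine hφle.trans ?_
    have h6 : (1 + r) ^ p ≤ 2 ^ p * r ^ p := by
      rw [← Real.mul_rpow (by norm_num) hrpos.le]
      exact Real.rpow_le_rpow (by linarith) (by linarith) hp0
    have hkey : D * G * (1 + r) ^ p ≤ 2 ^ p * (D * G + T + 1) * r ^ p := by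
      have hDG : 0 ≤ D * G := mul_nonneg hD0.le hG0
      calc D * G * (1 + r) ^ p ≤ D * G * (2 ^ p * r ^ p) :=
            mul_le_mul_of_nonneg_left h6 hDG
        _ ≤ (D * G + T + 1) * (2 ^ p * r ^ p) :=
            mul_le_mul_of_nonneg_right (by linarith) (by positivity)
        _ = 2 ^ p * (D * G + T + 1) * r ^ p := by ring
    have h8 : D * G * (r ^ p)⁻¹ ≤ 2 ^ p * (D * G + T + 1) * ((1 + r) ^ p)⁻¹ := by
      rw [← div_eq_mul_inv, ← div_eq_mul_inv, div_le_div_iff₀ hrp h1rp]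
      exact hkey
    calc (Real.exp r * D * (r ^ p)⁻¹) * G = (D * G * (r ^ p)⁻¹) * Real.exp r := by ring
      _ ≤ (2 ^ p * (D * G + T + 1) * ((1 + r) ^ p)⁻¹) * Real.exp r :=
          mul_le_mul_of_nonneg_right h8 (Real.exp_pos r).le
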